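/- Let a and Θ be Laurent polynomials over ℂ with Θ⋆ = Θ, and let n_b ≥ 1 be an integer such that (1−z)^{n_b}(1−z^{−1})^{n_b} divides Θ(z) − Θ(z²)a⋆(z)a(z) and (1−z^{−1})^{n_b}(1+z)^{n_b} divides Θ(z²)a⋆(z)a(−z), so that N_{a,Θ|n_b} is well defined. (i) If b₁, b₂ are Laurent polynomials such that {a; b₁, b₂}_{Θ,(1,−1)} is a quasi-tight framelet filter bank with vm(b₁) ≥ n_b and vm(b₂) ≥ n_b, and b̊_ℓ(z) := b_ℓ(z)/(1−z)^{n_b} for ℓ = 1, 2, then N_{a,Θ|n_b}(z) = W(z)⋆·diag(1,−1)·W(z), where W is the 2×2 matrix of Laurent polynomials with entries W_{ℓ,1} = b̊_ℓ^{[0]} and W_{ℓ,2} = b̊_ℓ^{[1]} for ℓ = 1, 2. (ii) Conversely, if V is a 2×2 matrix of Laurent polynomials with N_{a,Θ|n_b}(z) = V(z)⋆·diag(1,−1)·V(z), then setting b_ℓ(z) := (1−z)^{n_b}·(V_{ℓ,1}(z²) + z·V_{ℓ,2}(z²)) for ℓ = 1, 2, the family {a; b₁, b₂}_{Θ,(1,−1)}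 is a quasi-tight framelet filter bank with vm(b₁) ≥ n_b and vm(b₂) ≥ n_b. -/

import Mathlib

open LaurentPolynomial Matrix
open scoped Classical

noncomputable section

abbrev LP := LaurentPolynomial ℂ

namespace QT

/-- The coefficient of `z^k` in a Laurent polynomial. -/
def coeff (u : LP) (k : ℤ) : ℂ := (AddMonoidAlgebra.coeff u) k

/-- The Hermitian conjugate `u⋆(z) = Σ conj(u(k)) z^{-k}`. -/
def hstar (u : LP) : LP :=
  AddMonoidAlgebra.ofCoeff
    (Finsupp.mapDomain (fun k => -k)
      (Finsupp.mapRange (starRingEnd ℂ) (map_zero _) (AddMonoidAlgebra.coeff u)))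

/-- `u` has symmetry with type `ε z^c`, i.e. `u(k) = ε u(c-k)` for all `k`. -/
def SymT (u : LP) (ε : ℂ) (c : ℤ) : Prop := ∀ k : ℤ, coeff u k = ε * coeff u (c - k)

def Sgn (ε : ℂ) : Prop := ε = 1 ∨ ε = -1

/-- `u` has symmetry (with some type). -/
def HasSym (u : LP) : Prop := ∃ ε c, Sgn ε ∧ SymT u ε c

/-- The Laurent polynomial `z - a`. -/
def zsub (a : ℂ) : LP := T 1 - LaurentPolynomial.C a

/-- `m` is the multiplicity of `z₀` as a zero of `u`. -/
def mzIs (u : LP) (z₀ : ℂ) (m : ℕ) : Prop := zsub z₀ ^ m ∣ u ∧ ¬ zsub z₀ ^ (m + 1) ∣ u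

/-- The multiplicity of `z₀` as a zero of `u`, as a function. -/
def mzF (u : LP) (z₀ : ℂ) : ℕ := sSup {m : ℕ | zsub z₀ ^ m ∣ u}

/-- The difference-of-(Hermitian)-squares property with respect to symmetry type `ε z^c`. -/
def DOS (u : LP) (ε : ℂ) (c : ℤ) : Prop :=
  ∃ (u₁ u₂ : LP) (ε₁ ε₂ : ℂ) (c₁ c₂ : ℤ),
    Sgn ε₁ ∧ Sgn ε₂ ∧ SymT u₁ ε₁ c₁ ∧ SymT u₂ ε₂ c₂ ∧
    u₁ * hstar u₁ - u₂ * hstar u₂ = u ∧ ε₁ * ε₂ = ε ∧ c₁ - c₂ = c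

/-- Degree: the largest exponent with nonzero coefficient (0 for the zero polynomial). -/
def degL (u : LP) : ℤ :=
  if h : u = 0 then 0
  else (AddMonoidAlgebra.coeff u).support.max' (Finsupp.support_nonempty_iff.mpr
    (fun h' => h (AddMonoidAlgebra.coeff_injective (by rw [h']; rfl))))

/-- Lower degree: the smallest exponent with nonzero coefficient (0 for zero). -/
def ldegL (u : LP) : ℤ :=
  if h : u = 0 then 0
  else (AddMonoidAlgebra.coeff u).support.min' (Finsupp.support_nonempty_iff.mpr
    (fun h' => h (AddMonoidAlgebra.coeff_injective (by rw [h']; rfl))))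

/-- Length `deg - ldeg`, with `len 0 = ⊥`. -/
def lenL (u : LP) : WithBot ℤ := if u = 0 then ⊥ else ((degL u - ldegL u : ℤ) : WithBot ℤ)

/-- `g` is a greatest common divisor of `a` and `b`. -/
def IsGCD2 (g a b : LP) : Prop := g ∣ a ∧ g ∣ b ∧ ∀ e : LP, e ∣ a → e ∣ b → e ∣ g

/-- `g` is a greatest common divisor of `a`, `b`, `c`, `d`. -/
def IsGCD4 (g a b c d : LP) : Prop :=
  g ∣ a ∧ g ∣ b ∧ g ∣ c ∧ g ∣ d ∧ ∀ e : LP, e ∣ a → e ∣ b → e ∣ c → e ∣ d → e ∣ g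

/-- The Hermitian conjugate transpose of a matrix of Laurent polynomials. -/
def hstarM (A : Matrix (Fin 2) (Fin 2) LP) : Matrix (Fin 2) (Fin 2) LP :=
  fun i j => hstar (A j i)

def IsHerm (A : Matrix (Fin 2) (Fin 2) LP) : Prop := hstarM A = A

/-- `diag(1, -1)`. -/
def Jmat : Matrix (Fin 2) (Fin 2) LP := Matrix.diagonal ![1, -1]

/-- A square matrix of Laurent polynomials is strongly invertible if its determinant is a
nonzero monomial. -/
def StrongInv (A : Matrix (Fin 2) (Fin 2) LP) : Prop :=
  ∃ (lam : ℂ) (k : ℤ), lam ≠ 0 ∧ A.det = LaurentPolynomial.C lam * T k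

/-- Compatible symmetry for a `2×2` matrix of Laurent polynomials. -/
def CompatSym (A : Matrix (Fin 2) (Fin 2) LP) : Prop :=
  ∃ (ε ε' : Fin 2 → ℂ) (c c' : Fin 2 → ℤ),
    (∀ j, Sgn (ε j)) ∧ (∀ k, Sgn (ε' k)) ∧
    ∀ j k, SymT (A j k) (ε j * ε' k) (c' k - c j)

/-- Substitution `z ↦ z²`. -/
def sqDom (u : LP) : LP :=
  AddMonoidAlgebra.ofCoeff (Finsupp.mapDomain (fun k => 2 * k) (AddMonoidAlgebra.coeff u))

/-- Substitution `z ↦ -z`. -/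
def negSub (u : LP) : LP :=
  (AddMonoidAlgebra.coeff u).sum fun k c =>
    (AddMonoidAlgebra.ofCoeff (Finsupp.single k ((-1 : ℂ) ^ k * c)) : LP)

/-- The `γ`-coset `u^{[γ]}(z) = Σ_k u(γ + 2k) z^k`. -/
def cosetL (u : LP) (γ : ℤ) : LP :=
  AddMonoidAlgebra.ofCoeff
    (Finsupp.comapDomain (fun k : ℤ => γ + 2 * k) (AddMonoidAlgebra.coeff u)
      (by intro a _ b _ h; simp only at h; omega))

/-- Evaluation of a Laurent polynomial at a point. -/
def evalL (u : LP) (z : ℂ) : ℂ := (AddMonoidAlgebra.coeff u).sum fun k c => c * z ^ k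

/-- `{a; b₁, b₂}_{Θ,(1,-1)}` is a quasi-tight framelet filter bank. -/
def QTFB (a Θ b₁ b₂ : LP) : Prop :=
  sqDom Θ * hstar a * a + hstar b₁ * b₁ - hstar b₂ * b₂ = Θ ∧
  sqDom Θ * hstar a * negSub a + hstar b₁ * negSub b₁ - hstar b₂ * negSub b₂ = 0

/-- The matrix `N_{a,Θ|n_b}` built from the quotients `A`, `B`. -/
def Nmat (A B : LP) : Matrix (Fin 2) (Fin 2) LP :=
  LaurentPolynomial.C (2 : ℂ)⁻¹ •
    !![cosetL A 0 + cosetL B 0, cosetL A 1 - cosetL B 1;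
       T 1 * (cosetL A 1 + cosetL B 1), cosetL A 0 - cosetL B 0]

def sg (k : ℤ) (c : ℂ) : LP := AddMonoidAlgebra.single k c

lemma lp_ext {u v : LP} (h : ∀ k, coeff u k = coeff v k) : u = v := AddMonoidAlgebra.coeff_injective (Finsupp.ext h)

lemma coeff_sg (k m : ℤ) (c : ℂ) : coeff (sg k c) m = if k = m then c else 0 := by
  unfold coeff sg; rw [AddMonoidAlgebra.coeff_single]; exact Finsupp.single_apply

lemma T_sg (n : ℤ) : (T n : LP) = sg n 1 := rfl

lemma one_sg : (1 : LP) = sg 0 1 := rfl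

lemma coeff_add (u v : LP) (k : ℤ) : coeff (u + v) k = coeff u k + coeff v k := by
  unfold coeff; rw [AddMonoidAlgebra.coeff_add, Finsupp.add_apply]

lemma coeff_zero (k : ℤ) : coeff (0 : LP) k = 0 := by simp [coeff]

lemma sg_mul (a b : ℤ) (x y : ℂ) : sg a x * sg b y = sg (a + b) (x * y) := by
  unfold sg; exact AddMonoidAlgebra.single_mul_single _ _ _ _

lemma coeff_hstar (u : LP) (k : ℤ) : coeff (hstar u) k = (starRingEnd ℂ) (coeff u (-k)) := by
  unfold hstar coeff
  rw [AddMonoidAlgebra.coeff_ofCoeff, show k = -(-k) by ring, Finsupp.mapDomain_apply neg_injective, Finsupp.mapRange_apply]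
  norm_num

lemma coeff_sqDom_even (u : LP) (k : ℤ) : coeff (sqDom u) (2 * k) = coeff u k := by
  unfold sqDom coeff
  rw [AddMonoidAlgebra.coeff_ofCoeff]
  exact Finsupp.mapDomain_apply (mul_right_injective₀ two_ne_zero) _ k

lemma coeff_sqDom_odd (u : LP) (k : ℤ) : coeff (sqDom u) (2 * k + 1) = 0 := by
  unfold sqDom coeff
  rw [AddMonoidAlgebra.coeff_ofCoeff]
  apply Finsupp.mapDomain_notin_range
  rintro ⟨m, hm⟩
  rw [show (fun k : ℤ => 2 * k) m = 2 * m from rfl] at hm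
  omega

lemma coeff_negSub (u : LP) (k : ℤ) : coeff (negSub u) k = (-1 : ℂ) ^ k * coeff u k := by
  unfold negSub coeff
  rw [AddMonoidAlgebra.coeff_finsuppSum]
  simp only [AddMonoidAlgebra.coeff_ofCoeff]
  rw [Finsupp.sum_apply]
  rw [Finsupp.sum]
  simp only [Finsupp.single_apply]
  rw [Finset.sum_ite_eq']
  by_cases h : k ∈ (AddMonoidAlgebra.coeff u).support
  · simp [h]
  · simp only [h, if_false]
    rw [show (AddMonoidAlgebra.coeff u) k = 0 from Finsupp.notMem_support_iff.mp h, mul_zero]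

lemma coeff_cosetL (u : LP) (γ k : ℤ) : coeff (cosetL u γ) k = coeff u (γ + 2 * k) := by
  unfold coeff cosetL; rw [AddMonoidAlgebra.coeff_ofCoeff]; rfl

lemma coeff_T_mul (n : ℤ) (u : LP) (k : ℤ) : coeff (T n * u) k = coeff u (k - n) := by
  have h1 : coeff (sg n 1 * u) k = (1 : ℂ) * coeff u (-n + k) :=
    by unfold coeff sg; exact AddMonoidAlgebra.coeff_single_mul_apply u 1 n k
  rw [T_sg, h1, one_mul]
  congr 1; ring

-- additivity

lemma hstar_add (u v : LP) : hstar (u + v) = hstar u + hstar v :=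
  lp_ext fun k => by simp [coeff_hstar, coeff_add]

lemma hstar_zero : hstar (0 : LP) = 0 := lp_ext fun k => by simp [coeff_hstar, coeff_zero]

lemma sqDom_add (u v : LP) : sqDom (u + v) = sqDom u + sqDom v := by
  unfold sqDom
  rw [AddMonoidAlgebra.coeff_add, Finsupp.mapDomain_add, AddMonoidAlgebra.ofCoeff_add]

lemma sqDom_zero : sqDom (0 : LP) = 0 := by unfold sqDom; simp

lemma negSub_add (u v : LP) : negSub (u + v) = negSub u + negSub v :=
  lp_ext fun k => by simp [coeff_negSub, coeff_add, mul_add]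

lemma negSub_zero : negSub (0 : LP) = 0 := lp_ext fun k => by simp [coeff_negSub, coeff_zero]

lemma cosetL_add (u v : LP) (γ : ℤ) : cosetL (u + v) γ = cosetL u γ + cosetL v γ :=
  lp_ext fun k => by simp [coeff_cosetL, coeff_add]

-- singles

lemma hstar_sg (k : ℤ) (c : ℂ) : hstar (sg k c) = sg (-k) ((starRingEnd ℂ) c) :=
  lp_ext fun m => by
    simp only [coeff_hstar, coeff_sg]
    rcases eq_or_ne k (-m) with h | h
    · simp [h]
    · rw [if_neg h, if_neg (by omega), map_zero]

lemma sqDom_sg (k : ℤ) (c : ℂ) : sqDom (sg k c) = sg (2 * k) c := by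
  unfold sqDom sg
  rw [AddMonoidAlgebra.coeff_single, Finsupp.mapDomain_single, AddMonoidAlgebra.ofCoeff_single]

lemma negSub_sg (k : ℤ) (c : ℂ) : negSub (sg k c) = sg k ((-1 : ℂ) ^ k * c) := by
  unfold negSub sg
  rw [AddMonoidAlgebra.coeff_single]
  exact Finsupp.sum_single_index (by simp)

-- multiplicativity

lemma map_mul_of (F : LP → LP) (h0 : F 0 = 0) (hadd : ∀ u v, F (u + v) = F u + F v)
    (hs : ∀ a b x y, F (sg a x * sg b y) = F (sg a x) * F (sg b y)) (u v : LP) :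
    F (u * v) = F u * F v := by
  induction u using AddMonoidAlgebra.induction_linear with
  | zero => rw [zero_mul, h0, zero_mul]
  | add f g hf hg =>
      rw [add_mul, hadd, hf, hg, hadd,
        add_mul]
  | single a x =>
      induction v using AddMonoidAlgebra.induction_linear with
      | zero => rw [mul_zero, h0, mul_zero]
      | add f g hf hg =>
          rw [mul_add, hadd, hf, hg,
            hadd, mul_add]
      | single b y => exact hs a b x y

lemma hstar_mul (u v : LP) : hstar (u * v) = hstar u * hstar v := by
  refine map_mul_of hstar hstar_zero hstar_add (fun a b x y => ?_) u v
  rw [sg_mul, hstar_sg, hstar_sg, hstar_sg, sg_mul, neg_add, RingHom.map_mul]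

lemma sqDom_mul (u v : LP) : sqDom (u * v) = sqDom u * sqDom v := by
  refine map_mul_of sqDom sqDom_zero sqDom_add (fun a b x y => ?_) u v
  rw [sg_mul, sqDom_sg, sqDom_sg, sqDom_sg, sg_mul, mul_add]

lemma negSub_mul (u v : LP) : negSub (u * v) = negSub u * negSub v := by
  refine map_mul_of negSub negSub_zero negSub_add (fun a b x y => ?_) u v
  rw [sg_mul, negSub_sg, negSub_sg, negSub_sg, sg_mul, zpow_add₀ (by norm_num : (-1 : ℂ) ≠ 0)]
  ring_nf

lemma coeff_sub (u v : LP) (k : ℤ) : coeff (u - v) k = coeff u k - coeff v k := by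
  unfold coeff; rw [AddMonoidAlgebra.coeff_sub, Finsupp.sub_apply]

lemma coeff_neg (u : LP) (k : ℤ) : coeff (-u) k = -coeff u k := by
  unfold coeff; rw [AddMonoidAlgebra.coeff_neg, Finsupp.neg_apply]

lemma hstar_sub (u v : LP) : hstar (u - v) = hstar u - hstar v :=
  lp_ext fun k => by simp [coeff_hstar, coeff_sub]

lemma sqDom_sub (u v : LP) : sqDom (u - v) = sqDom u - sqDom v := by
  have h := sqDom_add (u - v) v
  rw [sub_add_cancel] at h
  rw [h]; ring

lemma negSub_sub (u v : LP) : negSub (u - v) = negSub u - negSub v :=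
  lp_ext fun k => by simp [coeff_negSub, coeff_sub, mul_sub]

lemma cosetL_sub (u v : LP) (γ : ℤ) : cosetL (u - v) γ = cosetL u γ - cosetL v γ :=
  lp_ext fun k => by simp [coeff_cosetL, coeff_sub]

lemma sg_neg (k : ℤ) (c : ℂ) : sg k (-c) = -sg k c := by
  unfold sg
  exact AddMonoidAlgebra.single_neg k c

lemma hstar_one : hstar (1 : LP) = 1 := by rw [one_sg, hstar_sg]; simp [sg]

lemma hstar_T (n : ℤ) : hstar (T n : LP) = T (-n) := by
  rw [T_sg, hstar_sg, _root_.map_one, T_sg]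

lemma sqDom_one : sqDom (1 : LP) = 1 := by rw [one_sg, sqDom_sg]; simp [sg]

lemma sqDom_T (n : ℤ) : sqDom (T n : LP) = T (2 * n) := by rw [T_sg, sqDom_sg, T_sg]

lemma negSub_one : negSub (1 : LP) = 1 := by rw [one_sg, negSub_sg]; simp [sg]

lemma negSub_T1 : negSub (T 1 : LP) = -T 1 := by
  rw [T_sg, negSub_sg]
  norm_num
  rw [show (-1 : ℂ) = -(1:ℂ) from rfl, sg_neg]

lemma hstar_pow (u : LP) (n : ℕ) : hstar (u ^ n) = hstar u ^ n := by
  induction n with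
  | zero => simp [hstar_one]
  | succ m ih => rw [pow_succ, hstar_mul, ih, pow_succ]

lemma negSub_pow (u : LP) (n : ℕ) : negSub (u ^ n) = negSub u ^ n := by
  induction n with
  | zero => simp [negSub_one]
  | succ m ih => rw [pow_succ, negSub_mul, ih, pow_succ]

lemma zpow_neg_one_even (m : ℤ) : (-1 : ℂ) ^ (2 * m) = 1 := by
  rw [_root_.zpow_mul]; norm_num

lemma negSub_sqDom (v : LP) : negSub (sqDom v) = sqDom v := by
  refine lp_ext fun k => ?_
  obtain ⟨m, hm | hm⟩ := Int.even_or_odd' k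
  · subst hm; rw [coeff_negSub, zpow_neg_one_even, one_mul]
  · subst hm; rw [coeff_negSub, coeff_sqDom_odd, mul_zero]

lemma hstar_sqDom (v : LP) : hstar (sqDom v) = sqDom (hstar v) := by
  refine lp_ext fun k => ?_
  obtain ⟨m, hm | hm⟩ := Int.even_or_odd' k
  · subst hm
    rw [coeff_hstar, coeff_sqDom_even, show -(2 * m) = 2 * (-m) by ring, coeff_sqDom_even,
      coeff_hstar]
  · subst hm
    rw [coeff_hstar, coeff_sqDom_odd, show -(2 * m + 1) = 2 * (-m - 1) + 1 by ring,
      coeff_sqDom_odd, map_zero]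

lemma cosetL_sqDom_zero (v : LP) : cosetL (sqDom v) 0 = v :=
  lp_ext fun k => by rw [coeff_cosetL, show (0 : ℤ) + 2 * k = 2 * k by ring, coeff_sqDom_even]

lemma cosetL_sqDom_one (v : LP) : cosetL (sqDom v) 1 = 0 :=
  lp_ext fun k => by
    rw [coeff_cosetL, show (1 : ℤ) + 2 * k = 2 * k + 1 by ring, coeff_sqDom_odd, coeff_zero]

lemma cosetL_T1_sqDom_zero (v : LP) : cosetL (T 1 * sqDom v) 0 = 0 :=
  lp_ext fun k => by
    rw [coeff_cosetL, coeff_T_mul, show (0 : ℤ) + 2 * k - 1 = 2 * (k - 1) + 1 by ring,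
      coeff_sqDom_odd, coeff_zero]

lemma cosetL_T1_sqDom_one (v : LP) : cosetL (T 1 * sqDom v) 1 = v :=
  lp_ext fun k => by
    rw [coeff_cosetL, coeff_T_mul, show (1 : ℤ) + 2 * k - 1 = 2 * k by ring, coeff_sqDom_even]

lemma cosetL_Tm1_sqDom_zero (v : LP) : cosetL (T (-1) * sqDom v) 0 = 0 :=
  lp_ext fun k => by
    rw [coeff_cosetL, coeff_T_mul, show (0 : ℤ) + 2 * k - (-1) = 2 * k + 1 by ring,
      coeff_sqDom_odd, coeff_zero]

lemma cosetL_Tm1_sqDom_one (v : LP) : cosetL (T (-1) * sqDom v) 1 = T (-1) * v :=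
  lp_ext fun k => by
    rw [coeff_cosetL, coeff_T_mul, show (1 : ℤ) + 2 * k - (-1) = 2 * (k + 1) by ring,
      coeff_sqDom_even, coeff_T_mul, show k - (-1) = k + 1 by ring]

lemma recon (u : LP) : u = sqDom (cosetL u 0) + T 1 * sqDom (cosetL u 1) := by
  refine lp_ext fun k => ?_
  obtain ⟨m, hm | hm⟩ := Int.even_or_odd' k
  · subst hm
    rw [coeff_add, coeff_sqDom_even, coeff_cosetL, coeff_T_mul,
      show 2 * m - 1 = 2 * (m - 1) + 1 by ring, coeff_sqDom_odd, add_zero,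
      show (0 : ℤ) + 2 * m = 2 * m by ring]
  · subst hm
    rw [coeff_add, show 2 * m + 1 = 2 * m + 1 by ring, coeff_sqDom_odd, coeff_T_mul,
      show 2 * m + 1 - 1 = 2 * m by ring, coeff_sqDom_even, coeff_cosetL, zero_add,
      show (1 : ℤ) + 2 * m = 2 * m + 1 by ring]

lemma T_mul_Tm1 : (T 1 : LP) * T (-1) = 1 := by
  rw [← T_add]; norm_num

lemma hstar_decomp (v : LP) :
    hstar v = sqDom (hstar (cosetL v 0)) + T (-1) * sqDom (hstar (cosetL v 1)) := by
  conv_lhs => rw [recon v]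
  rw [hstar_add, hstar_mul, hstar_T, hstar_sqDom, hstar_sqDom]

lemma negSub_decomp (w : LP) :
    negSub w = sqDom (cosetL w 0) - T 1 * sqDom (cosetL w 1) := by
  conv_lhs => rw [recon w]
  rw [negSub_add, negSub_mul, negSub_T1, negSub_sqDom, negSub_sqDom]
  ring

lemma prod_decomp (v w : LP) :
    hstar v * w =
      sqDom (hstar (cosetL v 0) * cosetL w 0 + hstar (cosetL v 1) * cosetL w 1) +
        T 1 * sqDom (hstar (cosetL v 0) * cosetL w 1) +
        T (-1) * sqDom (hstar (cosetL v 1) * cosetL w 0) := by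
  have eA : sqDom (hstar (cosetL v 0) * cosetL w 0 + hstar (cosetL v 1) * cosetL w 1) =
      sqDom (hstar (cosetL v 0)) * sqDom (cosetL w 0) +
        sqDom (hstar (cosetL v 1)) * sqDom (cosetL w 1) := by
    rw [sqDom_add, sqDom_mul, sqDom_mul]
  have eB : sqDom (hstar (cosetL v 0) * cosetL w 1) =
      sqDom (hstar (cosetL v 0)) * sqDom (cosetL w 1) := sqDom_mul _ _
  have eC : sqDom (hstar (cosetL v 1) * cosetL w 0) =
      sqDom (hstar (cosetL v 1)) * sqDom (cosetL w 0) := sqDom_mul _ _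
  rw [hstar_decomp v]
  conv_lhs => rw [recon w]
  linear_combination (-1 : LP) * eA - T 1 * eB - T (-1) * eC +
    sqDom (hstar (cosetL v 1)) * sqDom (cosetL w 1) * T_mul_Tm1

lemma negprod_decomp (v w : LP) :
    hstar v * negSub w =
      sqDom (hstar (cosetL v 0) * cosetL w 0 - hstar (cosetL v 1) * cosetL w 1) -
        T 1 * sqDom (hstar (cosetL v 0) * cosetL w 1) +
        T (-1) * sqDom (hstar (cosetL v 1) * cosetL w 0) := by
  have eA : sqDom (hstar (cosetL v 0) * cosetL w 0 - hstar (cosetL v 1) * cosetL w 1) =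
      sqDom (hstar (cosetL v 0)) * sqDom (cosetL w 0) -
        sqDom (hstar (cosetL v 1)) * sqDom (cosetL w 1) := by
    rw [sqDom_sub, sqDom_mul, sqDom_mul]
  have eB : sqDom (hstar (cosetL v 0) * cosetL w 1) =
      sqDom (hstar (cosetL v 0)) * sqDom (cosetL w 1) := sqDom_mul _ _
  have eC : sqDom (hstar (cosetL v 1) * cosetL w 0) =
      sqDom (hstar (cosetL v 1)) * sqDom (cosetL w 0) := sqDom_mul _ _
  rw [hstar_decomp v, negSub_decomp w]
  linear_combination (-1 : LP) * eA + T 1 * eB - T (-1) * eC -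
    sqDom (hstar (cosetL v 1)) * sqDom (cosetL w 1) * T_mul_Tm1

lemma coset_prod_0 (v w : LP) :
    cosetL (hstar v * w) 0 =
      hstar (cosetL v 0) * cosetL w 0 + hstar (cosetL v 1) * cosetL w 1 := by
  rw [prod_decomp v w, cosetL_add, cosetL_add, cosetL_sqDom_zero, cosetL_T1_sqDom_zero,
    cosetL_Tm1_sqDom_zero]
  ring

lemma coset_prod_1 (v w : LP) :
    cosetL (hstar v * w) 1 =
      hstar (cosetL v 0) * cosetL w 1 + T (-1) * (hstar (cosetL v 1) * cosetL w 0) := by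
  rw [prod_decomp v w, cosetL_add, cosetL_add, cosetL_sqDom_one, cosetL_T1_sqDom_one,
    cosetL_Tm1_sqDom_one]
  ring

lemma coset_negprod_0 (v w : LP) :
    cosetL (hstar v * negSub w) 0 =
      hstar (cosetL v 0) * cosetL w 0 - hstar (cosetL v 1) * cosetL w 1 := by
  rw [negprod_decomp v w, cosetL_add, cosetL_sub, cosetL_sqDom_zero, cosetL_T1_sqDom_zero,
    cosetL_Tm1_sqDom_zero]
  ring

lemma coset_negprod_1 (v w : LP) :
    cosetL (hstar v * negSub w) 1 =
      -(hstar (cosetL v 0) * cosetL w 1) + T (-1) * (hstar (cosetL v 1) * cosetL w 0) := by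
  rw [negprod_decomp v w, cosetL_add, cosetL_sub, cosetL_sqDom_one, cosetL_T1_sqDom_one,
    cosetL_Tm1_sqDom_one]
  ring

lemma C_half_two : (LaurentPolynomial.C (2 : ℂ)⁻¹ : LP) * 2 = 1 := by
  rw [show (2 : LP) = LaurentPolynomial.C (2 : ℂ) from (map_ofNat _ 2).symm, ← _root_.map_mul]
  norm_num

lemma Nmat_formula (b₁ b₂ : LP) :
    Nmat (hstar b₁ * b₁ - hstar b₂ * b₂) (hstar b₁ * negSub b₁ - hstar b₂ * negSub b₂) =
      !![hstar (cosetL b₁ 0) * cosetL b₁ 0 - hstar (cosetL b₂ 0) * cosetL b₂ 0,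
         hstar (cosetL b₁ 0) * cosetL b₁ 1 - hstar (cosetL b₂ 0) * cosetL b₂ 1;
         hstar (cosetL b₁ 1) * cosetL b₁ 0 - hstar (cosetL b₂ 1) * cosetL b₂ 0,
         hstar (cosetL b₁ 1) * cosetL b₁ 1 - hstar (cosetL b₂ 1) * cosetL b₂ 1] := by
  set P00 := hstar (cosetL b₁ 0) * cosetL b₁ 0 - hstar (cosetL b₂ 0) * cosetL b₂ 0 with hP00
  set P01 := hstar (cosetL b₁ 0) * cosetL b₁ 1 - hstar (cosetL b₂ 0) * cosetL b₂ 1 with hP01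
  set P10 := hstar (cosetL b₁ 1) * cosetL b₁ 0 - hstar (cosetL b₂ 1) * cosetL b₂ 0 with hP10
  set P11 := hstar (cosetL b₁ 1) * cosetL b₁ 1 - hstar (cosetL b₂ 1) * cosetL b₂ 1 with hP11
  have eqA0 : cosetL (hstar b₁ * b₁ - hstar b₂ * b₂) 0 = P00 + P11 := by
    rw [cosetL_sub, coset_prod_0, coset_prod_0, hP00, hP11]; ring
  have eqA1 : cosetL (hstar b₁ * b₁ - hstar b₂ * b₂) 1 = P01 + T (-1) * P10 := by
    rw [cosetL_sub, coset_prod_1, coset_prod_1, hP01, hP10]; ring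
  have eqB0 : cosetL (hstar b₁ * negSub b₁ - hstar b₂ * negSub b₂) 0 = P00 - P11 := by
    rw [cosetL_sub, coset_negprod_0, coset_negprod_0, hP00, hP11]; ring
  have eqB1 : cosetL (hstar b₁ * negSub b₁ - hstar b₂ * negSub b₂) 1 = -P01 + T (-1) * P10 := by
    rw [cosetL_sub, coset_negprod_1, coset_negprod_1, hP01, hP10]; ring
  have h00 : LaurentPolynomial.C (2 : ℂ)⁻¹ *
      (cosetL (hstar b₁ * b₁ - hstar b₂ * b₂) 0 +
        cosetL (hstar b₁ * negSub b₁ - hstar b₂ * negSub b₂) 0) = P00 := by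
    linear_combination LaurentPolynomial.C (2 : ℂ)⁻¹ * eqA0 +
      LaurentPolynomial.C (2 : ℂ)⁻¹ * eqB0 + P00 * C_half_two
  have h01 : LaurentPolynomial.C (2 : ℂ)⁻¹ *
      (cosetL (hstar b₁ * b₁ - hstar b₂ * b₂) 1 -
        cosetL (hstar b₁ * negSub b₁ - hstar b₂ * negSub b₂) 1) = P01 := by
    linear_combination LaurentPolynomial.C (2 : ℂ)⁻¹ * eqA1 -
      LaurentPolynomial.C (2 : ℂ)⁻¹ * eqB1 + P01 * C_half_two
  have h10 : LaurentPolynomial.C (2 : ℂ)⁻¹ *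
      (T 1 * (cosetL (hstar b₁ * b₁ - hstar b₂ * b₂) 1 +
        cosetL (hstar b₁ * negSub b₁ - hstar b₂ * negSub b₂) 1)) = P10 := by
    linear_combination LaurentPolynomial.C (2 : ℂ)⁻¹ * T 1 * eqA1 +
      LaurentPolynomial.C (2 : ℂ)⁻¹ * T 1 * eqB1 + P10 * T 1 * T (-1) * C_half_two +
      P10 * T_mul_Tm1
  have h11 : LaurentPolynomial.C (2 : ℂ)⁻¹ *
      (cosetL (hstar b₁ * b₁ - hstar b₂ * b₂) 0 -
        cosetL (hstar b₁ * negSub b₁ - hstar b₂ * negSub b₂) 0) = P11 := by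
    linear_combination LaurentPolynomial.C (2 : ℂ)⁻¹ * eqA0 -
      LaurentPolynomial.C (2 : ℂ)⁻¹ * eqB0 + P11 * C_half_two
  unfold Nmat
  refine Matrix.ext fun i j => ?_
  rw [Matrix.smul_apply, smul_eq_mul]
  fin_cases i <;> fin_cases j <;>
    simp only [Matrix.cons_val', Matrix.cons_val_zero, Matrix.cons_val_one, Matrix.head_cons,
      Matrix.empty_val', Matrix.cons_val_fin_one, Matrix.head_fin_const, Matrix.of_apply,
      Fin.mk_zero, Fin.mk_one]
  exacts [h00, h01, h10, h11]

lemma VJV (V : Matrix (Fin 2) (Fin 2) LP) :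
    hstarM V * Jmat * V =
      !![hstar (V 0 0) * V 0 0 - hstar (V 1 0) * V 1 0,
         hstar (V 0 0) * V 0 1 - hstar (V 1 0) * V 1 1;
         hstar (V 0 1) * V 0 0 - hstar (V 1 1) * V 1 0,
         hstar (V 0 1) * V 0 1 - hstar (V 1 1) * V 1 1] := by
  refine Matrix.ext fun i j => ?_
  fin_cases i <;> fin_cases j <;>
    simp [hstarM, Jmat, Matrix.mul_apply, Fin.sum_univ_two, Matrix.diagonal] <;> ring

lemma C_ne_zero {c : ℂ} (hc : c ≠ 0) : (LaurentPolynomial.C c : LP) ≠ 0 := by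
  intro h
  apply hc
  have h2 := congrArg (fun p => coeff p 0) h
  simpa [coeff] using h2

lemma T_ne_zero (n : ℤ) : (T n : LP) ≠ 0 := by
  intro h
  have h2 := congrArg (fun p => coeff p n) h
  rw [T_sg] at h2
  simp [coeff_sg, coeff_zero] at h2

lemma coeff_one (k : ℤ) : coeff (1 : LP) k = if k = 0 then 1 else 0 := by
  rw [one_sg, coeff_sg]
  simp [eq_comm]

lemma one_sub_T_ne : (1 - T 1 : LP) ≠ 0 := by
  intro h
  have h2 := congrArg (fun p => coeff p 1) h
  rw [coeff_sub] at h2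
  rw [coeff_one, T_sg, coeff_sg] at h2
  simp only [coeff_zero] at h2
  norm_num at h2

lemma one_sub_Tm_ne : (1 - T (-1) : LP) ≠ 0 := by
  intro h
  have h2 := congrArg (fun p => coeff p (-1)) h
  rw [coeff_sub] at h2
  rw [coeff_one, T_sg, coeff_sg] at h2
  simp only [coeff_zero] at h2
  norm_num at h2

lemma one_add_T_ne : (1 + T 1 : LP) ≠ 0 := by
  intro h
  have h2 := congrArg (fun p => coeff p 1) h
  rw [coeff_add] at h2
  rw [coeff_one, T_sg, coeff_sg] at h2
  simp only [coeff_zero] at h2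
  norm_num at h2

lemma two_ne_zero_LP : (2 : LP) ≠ 0 := by
  rw [show (2 : LP) = LaurentPolynomial.C (2 : ℂ) from (map_ofNat _ 2).symm]
  exact C_ne_zero (by norm_num)

lemma Nmat_inj {A B A' B' : LP} (h : Nmat A B = Nmat A' B') : A = A' ∧ B = B' := by
  have hC : (LaurentPolynomial.C (2 : ℂ)⁻¹ : LP) ≠ 0 := C_ne_zero (by norm_num)
  have e00 := congrFun (congrFun h 0) 0
  have e01 := congrFun (congrFun h 0) 1
  have e10 := congrFun (congrFun h 1) 0
  have e11 := congrFun (congrFun h 1) 1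
  simp only [Nmat, Matrix.smul_apply, smul_eq_mul, Matrix.cons_val', Matrix.cons_val_zero,
    Matrix.cons_val_one, Matrix.head_cons, Matrix.empty_val', Matrix.cons_val_fin_one,
    Matrix.head_fin_const, Matrix.of_apply] at e00 e01 e10 e11
  have E1 := mul_left_cancel₀ hC e00
  have E2 := mul_left_cancel₀ hC e01
  have E3 := mul_left_cancel₀ (T_ne_zero 1) (mul_left_cancel₀ hC e10)
  have E4 := mul_left_cancel₀ hC e11
  have hA0 : cosetL A 0 = cosetL A' 0 :=
    mul_left_cancel₀ two_ne_zero_LP (by linear_combination E1 + E4)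
  have hA1 : cosetL A 1 = cosetL A' 1 :=
    mul_left_cancel₀ two_ne_zero_LP (by linear_combination E2 + E3)
  have hB0 : cosetL B 0 = cosetL B' 0 :=
    mul_left_cancel₀ two_ne_zero_LP (by linear_combination E1 - E4)
  have hB1 : cosetL B 1 = cosetL B' 1 :=
    mul_left_cancel₀ two_ne_zero_LP (by linear_combination E3 - E2)
  constructor
  · rw [recon A, hA0, hA1, ← recon A']
  · rw [recon B, hB0, hB1, ← recon B']

lemma hstar_shift (nb : ℕ) (u : LP) :
    hstar ((1 - T 1) ^ nb * u) = (1 - T (-1)) ^ nb * hstar u := by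
  rw [hstar_mul, hstar_pow, hstar_sub, hstar_one, hstar_T]

lemma negSub_shift (nb : ℕ) (u : LP) :
    negSub ((1 - T 1) ^ nb * u) = (1 + T 1) ^ nb * negSub u := by
  rw [negSub_mul, negSub_pow, negSub_sub, negSub_one, negSub_T1, sub_neg_eq_add]

lemma dvd_shift (nb : ℕ) (x : LP) : (T 1 - 1 : LP) ^ nb ∣ (1 - T 1) ^ nb * x := by
  refine ⟨(-1) ^ nb * x, ?_⟩
  rw [show (1 - T 1 : LP) = (T 1 - 1) * (-1) by ring, mul_pow]
  ring

/-- the general construction scheme for quasi-tight framelet filter banks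
(Theorem 4.1 of the paper). -/
theorem quasi_tight_framelet_construction_scheme
    (a Θ : LP) (hΘstar : hstar Θ = Θ) (nb : ℕ) (hnb : 1 ≤ nb)
    (hd1 : ((1 - T 1 : LP)) ^ nb * (1 - T (-1)) ^ nb ∣ Θ - sqDom Θ * hstar a * a)
    (hd2 : ((1 - T (-1) : LP)) ^ nb * (1 + T 1) ^ nb ∣ sqDom Θ * hstar a * negSub a) :
    ∀ A B : LP,
      Θ - sqDom Θ * hstar a * a = (1 - T 1) ^ nb * (1 - T (-1)) ^ nb * A →
      -(sqDom Θ * hstar a * negSub a) = (1 - T (-1)) ^ nb * (1 + T 1) ^ nb * B →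
      ((∀ b₁ b₂ : LP, QTFB a Θ b₁ b₂ →
          (T 1 - 1 : LP) ^ nb ∣ b₁ → (T 1 - 1 : LP) ^ nb ∣ b₂ →
          ∀ bb₁ bb₂ : LP, b₁ = (1 - T 1) ^ nb * bb₁ → b₂ = (1 - T 1) ^ nb * bb₂ →
            Nmat A B =
              hstarM !![cosetL bb₁ 0, cosetL bb₁ 1; cosetL bb₂ 0, cosetL bb₂ 1] * Jmat *
                !![cosetL bb₁ 0, cosetL bb₁ 1; cosetL bb₂ 0, cosetL bb₂ 1]) ∧
       (∀ V : Matrix (Fin 2) (Fin 2) LP, Nmat A B = hstarM V * Jmat * V →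
          QTFB a Θ ((1 - T 1) ^ nb * (sqDom (V 0 0) + T 1 * sqDom (V 0 1)))
            ((1 - T 1) ^ nb * (sqDom (V 1 0) + T 1 * sqDom (V 1 1))) ∧
          (T 1 - 1 : LP) ^ nb ∣ (1 - T 1) ^ nb * (sqDom (V 0 0) + T 1 * sqDom (V 0 1)) ∧
          (T 1 - 1 : LP) ^ nb ∣ (1 - T 1) ^ nb * (sqDom (V 1 0) + T 1 * sqDom (V 1 1)))) := by
  intro A B hA hB
  have hD1ne : ((1 - T 1 : LP) ^ nb * (1 - T (-1)) ^ nb) ≠ 0 :=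
    mul_ne_zero (pow_ne_zero _ one_sub_T_ne) (pow_ne_zero _ one_sub_Tm_ne)
  have hD2ne : ((1 - T (-1) : LP) ^ nb * (1 + T 1) ^ nb) ≠ 0 :=
    mul_ne_zero (pow_ne_zero _ one_sub_Tm_ne) (pow_ne_zero _ one_add_T_ne)
  constructor
  · -- part (i)
    intro b₁ b₂ hq hb1 hb2 bb₁ bb₂ h1 h2
    have hs1 : hstar b₁ = (1 - T (-1)) ^ nb * hstar bb₁ := by rw [h1, hstar_shift]
    have hs2 : hstar b₂ = (1 - T (-1)) ^ nb * hstar bb₂ := by rw [h2, hstar_shift]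
    have hn1 : negSub b₁ = (1 + T 1) ^ nb * negSub bb₁ := by rw [h1, negSub_shift]
    have hn2 : negSub b₂ = (1 + T 1) ^ nb * negSub bb₂ := by rw [h2, negSub_shift]
    have hAeq : A = hstar bb₁ * bb₁ - hstar bb₂ * bb₂ := by
      refine mul_left_cancel₀ hD1ne ?_
      rw [← hA]
      linear_combination -hq.1 + b₁ * hs1 + (1 - T (-1)) ^ nb * hstar bb₁ * h1 -
        b₂ * hs2 - (1 - T (-1)) ^ nb * hstar bb₂ * h2
    have hBeq : B = hstar bb₁ * negSub bb₁ - hstar bb₂ * negSub bb₂ := by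
      refine mul_left_cancel₀ hD2ne ?_
      rw [← hB]
      linear_combination -hq.2 + negSub b₁ * hs1 + (1 - T (-1)) ^ nb * hstar bb₁ * hn1 -
        negSub b₂ * hs2 - (1 - T (-1)) ^ nb * hstar bb₂ * hn2
    rw [hAeq, hBeq, Nmat_formula, VJV]
    congr 1 <;>
      simp [Matrix.cons_val_zero, Matrix.cons_val_one, Matrix.head_cons]
  · -- part (ii)
    intro V hV
    have hc0 : ∀ x y : LP, cosetL (sqDom x + T 1 * sqDom y) 0 = x := fun x y => by
      rw [cosetL_add, cosetL_sqDom_zero, cosetL_T1_sqDom_zero, add_zero]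
    have hc1 : ∀ x y : LP, cosetL (sqDom x + T 1 * sqDom y) 1 = y := fun x y => by
      rw [cosetL_add, cosetL_sqDom_one, cosetL_T1_sqDom_one, zero_add]
    have hNf := Nmat_formula (sqDom (V 0 0) + T 1 * sqDom (V 0 1))
      (sqDom (V 1 0) + T 1 * sqDom (V 1 1))
    simp only [hc0, hc1] at hNf
    have hmain : Nmat A B =
        Nmat (hstar (sqDom (V 0 0) + T 1 * sqDom (V 0 1)) * (sqDom (V 0 0) + T 1 * sqDom (V 0 1)) -
            hstar (sqDom (V 1 0) + T 1 * sqDom (V 1 1)) * (sqDom (V 1 0) + T 1 * sqDom (V 1 1)))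
          (hstar (sqDom (V 0 0) + T 1 * sqDom (V 0 1)) * negSub (sqDom (V 0 0) + T 1 * sqDom (V 0 1)) -
            hstar (sqDom (V 1 0) + T 1 * sqDom (V 1 1)) * negSub (sqDom (V 1 0) + T 1 * sqDom (V 1 1))) := by
      rw [hV, VJV]
      exact hNf.symm
    obtain ⟨hAeq, hBeq⟩ := Nmat_inj hmain
    refine ⟨⟨?_, ?_⟩, dvd_shift nb _, dvd_shift nb _⟩
    · rw [hstar_shift, hstar_shift]
      linear_combination -hA - (1 - T 1) ^ nb * (1 - T (-1)) ^ nb * hAeq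
    · rw [hstar_shift, hstar_shift, negSub_shift, negSub_shift]
      linear_combination -hB - (1 - T (-1)) ^ nb * (1 + T 1) ^ nb * hBeq

end QT
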